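/- Let H, K be Hilbert spaces with dim K = n < ∞, let {τₖ} be an orthonormal basis of H, and let A be the set of unit vectors in H⊗K of the form Σ_{k=1}^n τₖ ⊗ ψₖ with ψₖ ∈ K and Σ ‖ψₖ‖² = 1. Then every unit vector in H⊗K can be written as (U ⊗ I_K)φ for some unitary U on H and some φ ∈ A; moreover A is compact. -/

import Mathlib

noncomputable section

private theorem pilp_norm_congr {ι : Type*} [Fintype ι] {E : Type*} [SeminormedAddCommGroup E]
    (ψ χ : PiLp 2 (fun _ : ι => E)) (h : ∀ i, ‖ψ i‖ = ‖χ i‖) : ‖ψ‖ = ‖χ‖ := by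
  have h1 := PiLp.norm_sq_eq_of_L2 (fun _ : ι => E) ψ
  have h2 := PiLp.norm_sq_eq_of_L2 (fun _ : ι => E) χ
  have h3 : ‖ψ‖ ^ 2 = ‖χ‖ ^ 2 := by
    rw [h1, h2]
    exact Finset.sum_congr rfl fun i _ => by rw [h i]
  have h4 := congrArg Real.sqrt h3
  rwa [Real.sqrt_sq (norm_nonneg _), Real.sqrt_sq (norm_nonneg _)] at h4

set_option maxHeartbeats 1000000 in
set_option synthInstance.maxHeartbeats 400000 in
/-- let `H` be a separable infinite-dimensional Hilbert space (with
orthonormal basis `τ : ℕ → H`), `K` an `n`-dimensional Hilbert space, and `A` the set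
of unit vectors of `H⊗K` of the form `Σ_{k<n} τₖ ⊗ ψₖ`.  Then every unit vector of
`H⊗K` can be written as `(U⊗I_K)φ` with `U` unitary on `H` and `φ ∈ A`; moreover `A`
is compact.  Here `H⊗K` is identified with `H^n = PiLp 2 (fun _ : Fin n => H)` via an
orthonormal basis of `K`, under which `A` is the set of unit vectors all of whose
components lie in `span{τ₀,…,τ_{n−1}}`, and `U⊗I_K` acts componentwise. -/
theorem unit_vectors_from_compact_slice
    {H : Type*} [NormedAddCommGroup H] [InnerProductSpace ℂ H] [CompleteSpace H]
    (τ : HilbertBasis ℕ ℂ H) (n : ℕ)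
    (A : Set (PiLp 2 (fun _ : Fin n => H)))
    (hA : A = {x : PiLp 2 (fun _ : Fin n => H) | ‖x‖ = 1 ∧
      ∀ i, x i ∈ Submodule.span ℂ ((fun k => τ k) '' Set.Iio n)}) :
    (∀ x : PiLp 2 (fun _ : Fin n => H), ‖x‖ = 1 →
        ∃ (U : H ≃ₗᵢ[ℂ] H) (φ : PiLp 2 (fun _ : Fin n => H)),
          φ ∈ A ∧ ∀ i, x i = U (φ i)) ∧
      IsCompact A := by
  classical
  subst hA
  -- `H` is separable
  haveI hsep : TopologicalSpace.SeparableSpace H := by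
    rw [← TopologicalSpace.isSeparable_univ_iff]
    have h1 : TopologicalSpace.IsSeparable (closure (Submodule.span ℂ (Set.range τ) : Set H)) :=
      ((Set.countable_range τ).isSeparable.span).closure
    rw [← Submodule.topologicalClosure_coe, τ.dense_span] at h1
    simpa using h1
  -- `H` is infinite dimensional
  have hinf : ¬ FiniteDimensional ℂ H := by
    intro h
    have := τ.orthonormal.linearIndependent.lt_aleph0_of_finiteDimensional
    simp at this
  constructor
  · intro x hx
    set W : Submodule ℂ H := Submodule.span ℂ (Set.range fun i : Fin n => x i) with hWdef
    haveI hWfin : FiniteDimensional ℂ W :=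
      FiniteDimensional.span_of_finite ℂ (Set.finite_range _)
    set m := Module.finrank ℂ W with hm
    have hmn : m ≤ n := by
      have := finrank_range_le_card (R := ℂ) (fun i : Fin n => x i)
      simpa [Set.finrank, ← hWdef, ← hm] using this
    let u : OrthonormalBasis (Fin m) ℂ W := stdOrthonormalBasis ℂ W
    let v : Fin m → H := fun k => (u k : H)
    have hv : Orthonormal ℂ v := u.orthonormal.comp_linearIsometry W.subtypeₗᵢ
    have hvW : Submodule.span ℂ (Set.range v) = W := by
      have h1 : Set.range v = W.subtype '' (Set.range u) := by
        rw [← Set.range_comp]; rfl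
      rw [h1, ← Submodule.map_span, ← OrthonormalBasis.coe_toBasis, Module.Basis.span_eq,
        Submodule.map_top, Submodule.range_subtype]
    -- extend `v` to a Hilbert basis of `H`
    obtain ⟨w, b, hsw, hb⟩ := hv.toSubtypeRange.exists_hilbertBasis_extension
    have hwortho : Orthonormal ℂ ((↑) : w → H) := by rw [← hb]; exact b.orthonormal
    -- `w` is countable
    haveI hwc : Countable w := by
      apply Pairwise.countable_of_isOpen_disjoint (s := fun y : w => Metric.ball (y : H) (1/2))
      · intro i j hij
        have h2 : ‖(i : H) - j‖ ^ 2 = 2 := by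
          have hinner : (inner ℂ ((i : H)) (-(j : H)) : ℂ) = 0 := by
            rw [inner_neg_right, hwortho.2 hij, neg_zero]
          have h6 := norm_add_sq_eq_norm_sq_add_norm_sq_of_inner_eq_zero _ _ hinner
          rw [← sub_eq_add_neg] at h6
          rw [pow_two, h6, norm_neg, hwortho.1 i, hwortho.1 j]; norm_num
        have h3 : (1:ℝ) ≤ ‖(i : H) - j‖ := by
          nlinarith [norm_nonneg ((i : H) - j)]
        have h4 : (1/2 : ℝ) + 1/2 ≤ dist (i : H) (j : H) := by
          rw [dist_eq_norm]; linarith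
        exact Metric.ball_disjoint_ball h4
      · intro i; exact Metric.isOpen_ball
      · intro i; exact Metric.nonempty_ball.2 (by norm_num)
    -- `w` is infinite
    haveI hwinf : Infinite w := by
      rw [Set.infinite_coe_iff]
      intro hfin
      haveI := hfin.to_subtype
      haveI := Fintype.ofFinite w
      exact hinf (Module.Finite.of_basis b.toOrthonormalBasis.toBasis)
    -- a nice enumeration of `w`
    let f : Fin m → w := fun k => ⟨v k, hsw ⟨k, rfl⟩⟩
    have hf : Function.Injective f := by
      intro a b hab
      have hab' : (f a : H) = (f b : H) := congrArg Subtype.val hab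
      exact hv.linearIndependent.injective hab'
    haveI h1 : Infinite ((Set.range f)ᶜ : Set w) := (Set.finite_range f).infinite_compl.to_subtype
    haveI h2 : Infinite {k : ℕ // ¬ k < m} := by
      haveI : Infinite (Set.Ici m) := inferInstance
      exact (Equiv.subtypeEquivRight fun x : ℕ => (not_lt (a := x) (b := m)).symm).infinite_iff.mp this
    obtain ⟨eqB⟩ : Nonempty ({k : ℕ // ¬ k < m} ≃ ((Set.range f)ᶜ : Set w)) :=
      nonempty_equiv_of_countable
    let e : ℕ ≃ w :=
      (Equiv.sumCompl (fun k : ℕ => k < m)).symm.trans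
        (((Fin.equivSubtype.symm.trans (Equiv.ofInjective f hf)).sumCongr eqB).trans
          (Equiv.Set.sumCompl (Set.range f)))
    have he : ∀ k : Fin m, e (k : ℕ) = f k := by
      intro k
      have hk : (k : ℕ) < m := k.isLt
      simp only [e, Equiv.trans_apply]
      rw [Equiv.sumCompl_symm_apply_of_pos (p := fun j : ℕ => j < m) hk]
      simp [Fin.equivSubtype, Equiv.ofInjective, Equiv.Set.sumCompl_apply_inl]
    -- a Hilbert basis of `H` indexed by `ℕ` whose first `m` vectors span `W`
    have hbe : Orthonormal ℂ (⇑b ∘ ⇑e) := b.orthonormal.comp e e.injective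
    have hsp : ⊤ ≤ (Submodule.span ℂ (Set.range (⇑b ∘ ⇑e))).topologicalClosure := by
      rw [Set.range_comp, Equiv.range_eq_univ, Set.image_univ]
      exact b.dense_span.ge
    let b' : HilbertBasis ℕ ℂ H := HilbertBasis.mk hbe hsp
    have hb'coe : ⇑b' = ⇑b ∘ ⇑e := HilbertBasis.coe_mk _ _
    have hvb' : ∀ k : Fin m, v k = b' (k : ℕ) := by
      intro k
      rw [hb'coe]
      simp only [Function.comp_apply, he k, hb]
      rfl
    let U : H ≃ₗᵢ[ℂ] H := τ.repr.trans b'.repr.symm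
    have hUτ : ∀ k : ℕ, U (τ k) = b' k := by
      intro k
      have h3 : τ.repr (τ k) = b'.repr (b' k) := by rw [τ.repr_self, b'.repr_self]
      simp only [U, LinearIsometryEquiv.trans_apply, h3, LinearIsometryEquiv.symm_apply_apply]
    have hUv : ∀ k : Fin m, U.symm (v k) = τ (k : ℕ) := by
      intro k
      rw [hvb' k, ← hUτ, LinearIsometryEquiv.symm_apply_apply]
    refine ⟨U, WithLp.toLp 2 (fun i => U.symm (x i)), ⟨?_, ?_⟩, ?_⟩
    · -- norm one
      exact (pilp_norm_congr _ x fun i => U.symm.norm_map (x i)).trans hx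
    · -- membership
      intro i
      have hxi : x i ∈ Submodule.span ℂ (Set.range v) := by
        rw [hvW]; exact Submodule.subset_span ⟨i, rfl⟩
      have h5 : U.symm (x i) ∈
          Submodule.map (U.symm.toLinearEquiv.toLinearMap) (Submodule.span ℂ (Set.range v)) :=
        ⟨x i, hxi, rfl⟩
      rw [Submodule.map_span] at h5
      refine Submodule.span_mono ?_ h5
      rintro - ⟨-, ⟨k, rfl⟩, rfl⟩
      exact ⟨(k : ℕ), lt_of_lt_of_le k.isLt hmn, (hUv k).symm⟩
    · intro i
      exact (U.apply_symm_apply (x i)).symm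
  · -- compactness
    set S : Submodule ℂ H := Submodule.span ℂ ((fun k => τ k) '' Set.Iio n) with hSdef
    haveI hSfin : FiniteDimensional ℂ S :=
      FiniteDimensional.span_of_finite ℂ ((Set.finite_Iio n).image _)
    set P : Submodule ℂ (PiLp 2 (fun _ : Fin n => H)) :=
      Submodule.comap (WithLp.linearEquiv 2 ℂ (∀ _ : Fin n, H)).toLinearMap
        (Submodule.pi Set.univ fun _ => S) with hPdef
    have hPmem : ∀ y : PiLp 2 (fun _ : Fin n => H), y ∈ P ↔ ∀ i, y i ∈ S := by
      intro y
      simp [hPdef, Submodule.mem_pi]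
    haveI hPfin : FiniteDimensional ℂ P := by
      haveI : FiniteDimensional ℂ (Submodule.pi Set.univ fun _ : Fin n => S) := by
        rw [← Submodule.iSup_map_single]
        infer_instance
      rw [hPdef, Submodule.comap_equiv_eq_map_symm]
      infer_instance
    haveI : ProperSpace P := FiniteDimensional.proper ℂ P
    set A : Set (PiLp 2 (fun _ : Fin n => H)) :=
      {x | ‖x‖ = 1 ∧ ∀ i, x i ∈ Submodule.span ℂ ((fun k => τ k) '' Set.Iio n)} with hAdef
    have hAeq : A = {y | ‖y‖ = 1} ∩ (P : Set (PiLp 2 (fun _ : Fin n => H))) := by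
      ext y
      simp only [hAdef, Set.mem_setOf_eq, Set.mem_inter_iff, SetLike.mem_coe, hPmem, hSdef]
    have hAclosed : IsClosed A := by
      rw [hAeq]
      exact (isClosed_singleton.preimage continuous_norm).inter P.closed_of_finiteDimensional
    have hAP : A ⊆ (P : Set (PiLp 2 (fun _ : Fin n => H))) := by
      rw [hAeq]; exact Set.inter_subset_right
    have hpre : IsCompact (Subtype.val ⁻¹' A : Set P) := by
      rw [Metric.isCompact_iff_isClosed_bounded]
      refine ⟨hAclosed.preimage continuous_subtype_val, ?_⟩
      refine Metric.isBounded_closedBall (x := (0 : P)) (r := 1) |>.subset ?_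
      intro y hy
      simp only [Set.mem_preimage] at hy
      simp only [Metric.mem_closedBall, dist_zero_right]
      have : ‖(y : PiLp 2 (fun _ : Fin n => H))‖ = 1 := hy.1
      rw [Submodule.norm_coe] at this
      exact le_of_eq this
    have : A = Subtype.val '' (Subtype.val ⁻¹' A : Set P) :=
      (Set.image_preimage_eq_of_subset (by rw [Subtype.range_val]; exact hAP)).symm
    rw [this]
    exact hpre.image continuous_subtype_val

end
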